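/- Let G be a nice finite simple graph with maximum average degree at most 3, i.e., every non-empty subgraph H of G satisfies 2·|E(H)| ≤ 3·|V(H)|, and let m := |E(G)|. Then for every set W of m + 6 distinct strictly positive integers, there exists an edge-injective neighbour-sum-distinguishing edge-weighting of G with all weights taken from W (i.e., an injective map from E(G) into W that is neighbour-sum-distinguishing). In particular, χ^{e,1}_Σ(G) ≤ |E(G)| + 6. -/

import Mathlib

open scoped Classical
open Finset

/-- The degree of a vertex `v` in a finite simple graph `G`. -/
noncomputable def degG {V : Type*} [Fintype V] (G : SimpleGraph V) (v : V) : ℕ :=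
  (Finset.univ.filter (fun x => G.Adj v x)).card

/-- The sum `σ_w(v)` of the weights of the edges of `G` incident to `v`. -/
noncomputable def vSum {V : Type*} [Fintype V] (G : SimpleGraph V) (w : Sym2 V → ℕ) (v : V) : ℕ :=
  ∑ x ∈ Finset.univ.filter (fun x => G.Adj v x), w s(v, x)

/-- An edge-weighting is edge-injective if distinct edges receive distinct weights. -/
def EdgeInjective {V : Type*} (G : SimpleGraph V) (w : Sym2 V → ℕ) : Prop :=
  ∀ e ∈ G.edgeSet, ∀ f ∈ G.edgeSet, w e = w f → e = f

/-- An edge-weighting is neighbour-sum-distinguishing if `σ_w(u) ≠ σ_w(v)` for every edge `uv`. -/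
def NSD {V : Type*} [Fintype V] (G : SimpleGraph V) (w : Sym2 V → ℕ) : Prop :=
  ∀ u v, G.Adj u v → vSum G w u ≠ vSum G w v

/-- A graph is nice if no edge has both of its endpoints of degree 1
(equivalently, no connected component is isomorphic to `K₂`). -/
def Nice {V : Type*} [Fintype V] (G : SimpleGraph V) : Prop :=
  ∀ u v, G.Adj u v → ¬ (degG G u = 1 ∧ degG G v = 1)

/-- `χ^{e,1}_Σ(G)`: the smallest `k` such that `G` admits an edge-injective
neighbour-sum-distinguishing edge-weighting with weights from `{1, ..., k}`. -/
noncomputable def chiE1 {V : Type*} [Fintype V] (G : SimpleGraph V) : ℕ :=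
  sInf {k | ∃ w : Sym2 V → ℕ, (∀ e ∈ G.edgeSet, w e ∈ Finset.Icc 1 k) ∧
    EdgeInjective G w ∧ NSD G w}

namespace NSDWork

variable {V : Type*} [Fintype V] {G : SimpleGraph V}

/-- incident edges of `x` within an edge finset `F` -/
noncomputable def inc (F : Finset (Sym2 V)) (x : V) : Finset (Sym2 V) :=
  F.filter (fun e => x ∈ e)

lemma mem_inc {F : Finset (Sym2 V)} {x : V} {e : Sym2 V} :
    e ∈ inc F x ↔ e ∈ F ∧ x ∈ e := Finset.mem_filter

lemma inc_mono {F F' : Finset (Sym2 V)} (h : F ⊆ F') (x : V) : inc F x ⊆ inc F' x :=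
  Finset.filter_subset_filter _ h

lemma nondiag_of_mem_edgeFinset {e : Sym2 V} (he : e ∈ G.edgeFinset) : ¬ e.IsDiag :=
  G.not_isDiag_of_mem_edgeSet (SimpleGraph.mem_edgeFinset.1 he)

lemma exists_other {e : Sym2 V} (he : e ∈ G.edgeFinset) {x : V} (hx : x ∈ e) :
    ∃ y, y ≠ x ∧ e = s(x, y) := by
  obtain ⟨y, rfl⟩ := Sym2.mem_iff_exists.1 hx
  refine ⟨y, ?_, rfl⟩
  intro h; subst h
  exact nondiag_of_mem_edgeFinset he (Sym2.isDiag_iff_proj_eq |>.2 rfl)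

lemma card_endpoints {e : Sym2 V} (he : e ∈ G.edgeFinset) :
    (Finset.univ.filter (fun x => x ∈ e)).card = 2 := by
  induction e with
  | _ a b =>
    have hab : a ≠ b := by
      intro h; exact nondiag_of_mem_edgeFinset he (by simp [h])
    have : (Finset.univ.filter (fun x => x ∈ s(a, b))) = {a, b} := by
      ext x; simp [Sym2.mem_iff]
    rw [this, Finset.card_insert_of_notMem (by simp [hab]), Finset.card_singleton]

/-- handshake for an arbitrary subset of the edges -/
lemma handshake {F : Finset (Sym2 V)} (hF : F ⊆ G.edgeFinset) :
    ∑ x : V, (inc F x).card = 2 * F.card := by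
  have h1 : ∀ x : V, (inc F x).card = ∑ e ∈ F, (if x ∈ e then 1 else 0) := by
    intro x; rw [inc, Finset.card_filter]
  simp only [h1]
  rw [Finset.sum_comm]
  have h2 : ∀ e ∈ F, (∑ x : V, if x ∈ e then 1 else 0) = 2 := by
    intro e he
    rw [← Finset.card_filter]
    exact card_endpoints (hF he)
  rw [Finset.sum_congr rfl h2]
  simp [Finset.card_univ, mul_comm]

lemma image_nbrs (v : V) :
    (Finset.univ.filter (fun x => G.Adj v x)).image (fun x => s(v, x)) = inc G.edgeFinset v := by
  ext e
  simp only [Finset.mem_image, Finset.mem_filter, Finset.mem_univ, true_and, mem_inc]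
  constructor
  · rintro ⟨x, hx, rfl⟩
    exact ⟨SimpleGraph.mem_edgeFinset.2 hx, Sym2.mem_mk_left _ _⟩
  · rintro ⟨he, hv⟩
    obtain ⟨y, hy, rfl⟩ := exists_other he hv
    exact ⟨y, by simpa using SimpleGraph.mem_edgeFinset.1 he, rfl⟩

lemma sum_inc (w : Sym2 V → ℕ) (v : V) :
    vSum G w v = ∑ e ∈ inc G.edgeFinset v, w e := by
  rw [vSum, ← image_nbrs]
  rw [Finset.sum_image]
  intro x hx y hy h
  exact Sym2.congr_right.1 h

lemma degG_eq_card_inc (v : V) : degG G v = (inc G.edgeFinset v).card := by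
  have := sum_inc (G := G) (fun _ => 1) v
  simp only [vSum] at this
  rw [degG, Finset.card_eq_sum_ones, Finset.card_eq_sum_ones]
  exact this


/-! ### Core definitions -/

variable (G) in
/-- edges adjacent to `e` (sharing an endpoint), other than `e` itself -/
noncomputable def DD (e : Sym2 V) : Finset (Sym2 V) :=
  G.edgeFinset.filter (fun f => f ≠ e ∧ ∃ x, x ∈ f ∧ x ∈ e)

variable (G) in
noncomputable def Risky : Finset (Sym2 V) :=
  G.edgeFinset.filter (fun e => (∀ x ∈ e, 2 ≤ degG G x) ∧ (∃ x ∈ e, 3 ≤ degG G x))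

variable (G) in
noncomputable def gam (H : Finset (Sym2 V)) (f : Sym2 V) : ℕ :=
  ((Risky G).filter (fun e => DD G e ⊆ H ∧ f ∈ DD G e)).card

lemma mem_DD {e f : Sym2 V} : f ∈ DD G e ↔ f ∈ G.edgeFinset ∧ f ≠ e ∧ ∃ x, x ∈ f ∧ x ∈ e :=
  Finset.mem_filter

lemma DD_subset_edgeFinset (e : Sym2 V) : DD G e ⊆ G.edgeFinset := Finset.filter_subset _ _

lemma mem_DD_symm {e f : Sym2 V} (he : e ∈ G.edgeFinset) (hf : f ∈ DD G e) : e ∈ DD G f := by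
  rw [mem_DD] at hf ⊢
  obtain ⟨h1, h2, x, hx1, hx2⟩ := hf
  exact ⟨he, fun h => h2 h.symm, x, hx2, hx1⟩

lemma inc_erase_subset_DD {e : Sym2 V} {x : V} (hx : x ∈ e) :
    (inc G.edgeFinset x).erase e ⊆ DD G e := by
  intro f hf
  rw [Finset.mem_erase, mem_inc] at hf
  exact mem_DD.2 ⟨hf.2.1, hf.1, x, hf.2.2, hx⟩

lemma risky_deg2 {e : Sym2 V} (he : e ∈ Risky G) {x : V} (hx : x ∈ e) : 2 ≤ degG G x :=
  (Finset.mem_filter.1 he).2.1 x hx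

lemma risky_mem_edgeFinset {e : Sym2 V} (he : e ∈ Risky G) : e ∈ G.edgeFinset :=
  (Finset.mem_filter.1 he).1

/-- given a risky edge with one endpoint of degree 2, the other endpoint has degree ≥ 3 -/
lemma risky_other_deg3 {x y : V} (he : s(x, y) ∈ Risky G) (hx : degG G x = 2) :
    3 ≤ degG G y := by
  obtain ⟨-, -, z, hz, h3⟩ := Finset.mem_filter.1 he
  rcases Sym2.mem_iff.1 hz with rfl | rfl
  · omega
  · exact h3


/-! ### The structures used in the discharging argument -/

variable (G) in
noncomputable def RR (H : Finset (Sym2 V)) : Finset (Sym2 V) :=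
  (Risky G).filter (fun e => DD G e ⊆ H)

variable (G) in
noncomputable def rr (H : Finset (Sym2 V)) (x : V) : ℕ := (inc (RR G H) x).card

variable (G) in
noncomputable def AA (H : Finset (Sym2 V)) : Finset V :=
  Finset.univ.filter (fun x => 0 < rr G H x)

variable (G) in
noncomputable def Estar (H : Finset (Sym2 V)) : Finset (Sym2 V) :=
  RR G H ∪ (H.filter (fun f => ∀ x ∈ f, x ∈ AA G H))

variable (G) in
noncomputable def degE (H : Finset (Sym2 V)) (x : V) : ℕ := (inc (Estar G H) x).card

variable (G) in
def defic (H : Finset (Sym2 V)) (x : V) : Prop := x ∈ AA G H ∧ degE G H x = 2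

variable (G) in
def relayer (H : Finset (Sym2 V)) (x : V) : Prop :=
  x ∈ AA G H ∧ degG G x = 3 ∧ rr G H x = 1 ∧
    ∃ z, s(x, z) ∈ RR G H ∧ s(x, z) ∉ H ∧ defic G H z

variable (G) in
noncomputable def pay (H : Finset (Sym2 V)) (x t : V) : ℤ :=
  if s(x, t) ∈ Estar G H ∧ ((5 ≤ rr G H x ∧ (defic G H t ∨ relayer G H t)) ∨
      (s(x, t) ∈ RR G H ∧ s(x, t) ∉ H ∧ defic G H t)) then 1 else 0

section Key

variable {H : Finset (Sym2 V)}

lemma RR_subset : RR G H ⊆ G.edgeFinset :=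
  (Finset.filter_subset _ _).trans (Finset.filter_subset _ _)

lemma DD_subset_H {e : Sym2 V} (he : e ∈ RR G H) : DD G e ⊆ H :=
  (Finset.mem_filter.1 he).2

lemma RR_risky {e : Sym2 V} (he : e ∈ RR G H) : e ∈ Risky G := (Finset.mem_filter.1 he).1

lemma mem_AA {x : V} : x ∈ AA G H ↔ 0 < rr G H x := by
  simp [AA]

lemma mem_AA_of_mem_RR {e : Sym2 V} (he : e ∈ RR G H) {x : V} (hx : x ∈ e) : x ∈ AA G H := by
  rw [mem_AA, rr, Finset.card_pos]
  exact ⟨e, mem_inc.2 ⟨he, hx⟩⟩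

/-- two distinct `RR`-edges sharing a vertex: each is in `H` -/
lemma RR_mem_H_of_two {e g : Sym2 V} (he : e ∈ RR G H) (hg : g ∈ RR G H) (hne : g ≠ e)
    {x : V} (hxg : x ∈ g) (hxe : x ∈ e) : g ∈ H :=
  DD_subset_H he (mem_DD.2 ⟨RR_subset hg, hne, x, hxg, hxe⟩)

lemma eq_of_two_mem {e : Sym2 V} {x y : V} (hxy : x ≠ y) (hx : x ∈ e) (hy : y ∈ e) :
    e = s(x, y) := by
  obtain ⟨z, rfl⟩ := Sym2.mem_iff_exists.1 hx
  rcases Sym2.mem_iff.1 hy with rfl | rfl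
  · exact absurd rfl hxy
  · rfl

section WithHyp

variable (hH : H ⊆ G.edgeFinset) (h7 : ∀ f ∈ H, 7 ≤ gam G H f)
include hH h7

lemma Estar_subset : Estar G H ⊆ G.edgeFinset := by
  apply Finset.union_subset RR_subset ((Finset.filter_subset _ _).trans hH)

lemma endpoint_mem_AA {f : Sym2 V} (hf : f ∈ Estar G H) {x : V} (hx : x ∈ f) : x ∈ AA G H := by
  rcases Finset.mem_union.1 hf with h | h
  · exact mem_AA_of_mem_RR h hx
  · exact (Finset.mem_filter.1 h).2 x hx

omit hH h7 in
lemma rr_le_degE (x : V) : rr G H x ≤ degE G H x :=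
  Finset.card_le_card (inc_mono Finset.subset_union_left x)

/-- The central count: for `f = s(x,y) ∈ H`, `rr x + rr y ≥ 7`, and `≥ 9` if `f ∈ RR`. -/
lemma rr_sum {f : Sym2 V} (hf : f ∈ H) {x y : V} (hxy : f = s(x, y)) :
    7 ≤ rr G H x + rr G H y ∧ (f ∈ RR G H → 9 ≤ rr G H x + rr G H y) := by
  have hxny : x ≠ y := by
    intro h
    exact nondiag_of_mem_edgeFinset (hH hf) (by rw [hxy, h]; simp)
  set S : Finset (Sym2 V) := (RR G H).filter (fun e => f ∈ DD G e) with hSdef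
  have hgam : gam G H f = S.card := by
    rw [gam, hSdef, RR, Finset.filter_filter]
  set U : Finset (Sym2 V) := inc (RR G H) x ∪ inc (RR G H) y with hUdef
  have hS : S ⊆ U.erase f := by
    intro e he
    rw [hSdef, Finset.mem_filter] at he
    obtain ⟨heR, hfD⟩ := he
    rw [mem_DD] at hfD
    obtain ⟨-, hne, z, hzf, hze⟩ := hfD
    rw [Finset.mem_erase, hUdef, Finset.mem_union, mem_inc, mem_inc]
    refine ⟨fun h => hne (h ▸ rfl), ?_⟩
    rw [hxy] at hzf
    rcases Sym2.mem_iff.1 hzf with rfl | rfl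
    · exact Or.inl ⟨heR, hze⟩
    · exact Or.inr ⟨heR, hze⟩
  have hUcard : U.card + (inc (RR G H) x ∩ inc (RR G H) y).card = rr G H x + rr G H y :=
    Finset.card_union_add_card_inter _ _
  have hInter : (inc (RR G H) x ∩ inc (RR G H) y) ⊆ {f} := by
    intro e he
    rw [Finset.mem_inter, mem_inc, mem_inc] at he
    rw [Finset.mem_singleton, eq_of_two_mem hxny he.1.2 he.2.2, hxy]
  have h7f := h7 f hf
  rw [hgam] at h7f
  have hSc := Finset.card_le_card hS
  by_cases hfRR : f ∈ RR G H
  · have hfU : f ∈ U := by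
      rw [hUdef, Finset.mem_union, mem_inc]
      exact Or.inl ⟨hfRR, by rw [hxy]; simp⟩
    have hec : (U.erase f).card = U.card - 1 := Finset.card_erase_of_mem hfU
    have hUpos : 1 ≤ U.card := Finset.card_pos.2 ⟨f, hfU⟩
    have hIc : (inc (RR G H) x ∩ inc (RR G H) y).card = 1 := by
      have : f ∈ inc (RR G H) x ∩ inc (RR G H) y := by
        rw [Finset.mem_inter, mem_inc, mem_inc]
        exact ⟨⟨hfRR, by rw [hxy]; simp⟩, ⟨hfRR, by rw [hxy]; simp⟩⟩
      have h1 : (inc (RR G H) x ∩ inc (RR G H) y) = {f} :=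
        Finset.Subset.antisymm hInter (Finset.singleton_subset_iff.2 this)
      rw [h1, Finset.card_singleton]
    constructor
    · omega
    · intro _; omega
  · have hIc : (inc (RR G H) x ∩ inc (RR G H) y).card = 0 := by
      rw [Finset.card_eq_zero]
      rw [Finset.eq_empty_iff_forall_notMem]
      intro e he
      have := hInter he
      rw [Finset.mem_singleton] at this
      subst this
      rw [Finset.mem_inter, mem_inc] at he
      exact hfRR he.1.1
    have : (U.erase f).card ≤ U.card := Finset.card_le_card (Finset.erase_subset _ _)
    exact ⟨by omega, fun h => absurd h hfRR⟩

lemma inc_Estar_full {x : V} (hx : x ∈ AA G H) (hr : rr G H x ≤ 6) :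
    inc (Estar G H) x = inc G.edgeFinset x := by
  apply Finset.Subset.antisymm (inc_mono (Estar_subset hH h7) x)
  intro g hg
  rw [mem_inc] at hg
  obtain ⟨hgE, hxg⟩ := hg
  rw [mem_inc]
  refine ⟨?_, hxg⟩
  by_cases hgR : g ∈ RR G H
  · exact Finset.mem_union.2 (Or.inl hgR)
  · obtain ⟨e, he⟩ := Finset.card_pos.1 (mem_AA.1 hx)
    rw [mem_inc] at he
    have hgne : g ≠ e := fun h => hgR (h ▸ he.1)
    have hgH : g ∈ H := DD_subset_H he.1 (mem_DD.2 ⟨hgE, hgne, x, hxg, he.2⟩)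
    obtain ⟨y, hyx, hgxy⟩ := exists_other hgE hxg
    have hsum := (rr_sum hH h7 hgH hgxy).1
    have hyA : y ∈ AA G H := mem_AA.2 (by omega)
    refine Finset.mem_union.2 (Or.inr (Finset.mem_filter.2 ⟨hgH, ?_⟩))
    intro z hz
    rw [hgxy] at hz
    rcases Sym2.mem_iff.1 hz with rfl | rfl
    · exact hx
    · exact hyA

lemma degE_eq_degG {x : V} (hx : x ∈ AA G H) (hr : rr G H x ≤ 6) :
    degE G H x = degG G x := by
  rw [degE, inc_Estar_full hH h7 hx hr, ← degG_eq_card_inc]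

lemma defic_degG {x : V} (hd : defic G H x) : degG G x = 2 ∧ rr G H x ≤ 2 := by
  have h1 : rr G H x ≤ 2 := hd.2 ▸ rr_le_degE x
  exact ⟨by rw [← degE_eq_degG hH h7 hd.1 (by omega), hd.2], h1⟩

omit hH h7 in
lemma relayer_rr {x : V} (hd : relayer G H x) : rr G H x = 1 := hd.2.2.1

lemma handshakeE : ∑ x ∈ AA G H, (degE G H x : ℤ) = 2 * (Estar G H).card := by
  have h := handshake (G := G) (Estar_subset hH h7)
  have h2 : ∑ x ∈ AA G H, degE G H x = ∑ x : V, degE G H x := by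
    apply Finset.sum_subset (Finset.subset_univ _)
    intro x _ hx
    rw [degE, Finset.card_eq_zero, Finset.eq_empty_iff_forall_notMem]
    intro e he
    rw [mem_inc] at he
    exact hx (endpoint_mem_AA hH h7 he.1 he.2)
  have h3 := h2.trans h
  have h4 : ((∑ x ∈ AA G H, degE G H x : ℕ) : ℤ) = ((2 * (Estar G H).card : ℕ) : ℤ) := by
    rw [h3]
  push_cast at h4
  exact h4

end WithHyp

/-! ### payments -/

variable (G) in
noncomputable def TX (H : Finset (Sym2 V)) (x : V) : Finset V :=
  Finset.univ.filter (fun t => pay G H x t ≠ 0)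

lemma pay_nonneg (x t : V) : 0 ≤ pay G H x t := by
  rw [pay]; split <;> simp

lemma mem_TX {x t : V} (h : t ∈ TX G H x) :
    s(x, t) ∈ Estar G H ∧ ((5 ≤ rr G H x ∧ (defic G H t ∨ relayer G H t)) ∨
      (s(x, t) ∈ RR G H ∧ s(x, t) ∉ H ∧ defic G H t)) := by
  rw [TX, Finset.mem_filter, pay] at h
  by_contra hc
  rw [if_neg hc] at h
  exact h.2 rfl

lemma pay_eq_one_iff {x t : V} : t ∈ TX G H x ↔ pay G H x t = 1 := by
  rw [TX, Finset.mem_filter, pay]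
  constructor
  · rintro ⟨-, h⟩
    by_contra
    split at h
    · simp_all
    · exact h rfl
  · intro h
    refine ⟨Finset.mem_univ _, ?_⟩
    rw [h]; simp

lemma sum_pay_eq_card (x : V) : (∑ t, pay G H x t) = ((TX G H x).card : ℤ) := by
  rw [← Finset.sum_subset (Finset.subset_univ (TX G H x))]
  · rw [Finset.sum_congr rfl (fun t ht => pay_eq_one_iff.1 ht)]
    simp
  · intro t _ ht
    rw [TX, Finset.mem_filter] at ht
    push_neg at ht
    exact ht (Finset.mem_univ _)

lemma TX_card_le {x : V} {F : Finset (Sym2 V)} (h : ∀ t ∈ TX G H x, s(x, t) ∈ F) :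
    (TX G H x).card ≤ F.card := by
  apply Finset.card_le_card_of_injOn (fun t => s(x, t)) h
  intro a _ b _ hab
  exact Sym2.congr_right.1 hab

lemma RR_edge_mem_H {x t : V} (hR : s(x, t) ∈ RR G H) (hr : 2 ≤ rr G H x) :
    s(x, t) ∈ H := by
  obtain ⟨e, he, hne⟩ := Finset.exists_mem_ne (s := inc (RR G H) x) (by rw [rr] at hr; omega) s(x, t)
  rw [mem_inc] at he
  exact RR_mem_H_of_two he.1 hR (fun h => hne (h.symm)) (Sym2.mem_mk_left _ _) he.2

lemma mem_inc_RR_self {x t : V} (hR : s(x, t) ∈ RR G H) : s(x, t) ∈ inc (RR G H) x :=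
  mem_inc.2 ⟨hR, Sym2.mem_mk_left _ _⟩

section WithHyp2

variable (hH : H ⊆ G.edgeFinset) (h7 : ∀ f ∈ H, 7 ≤ gam G H f)
include hH h7

omit hH h7 in
lemma TX_zero_small {x : V} (h4 : rr G H x ≤ 4) (h1 : rr G H x ≠ 1) : TX G H x = ∅ := by
  rw [Finset.eq_empty_iff_forall_notMem]
  intro t ht
  rcases (mem_TX ht).2 with ⟨h5, -⟩ | ⟨hRt, hnH, -⟩
  · omega
  · rcases Nat.lt_or_ge (rr G H x) 2 with h | h
    · have : 0 < rr G H x := Finset.card_pos.2 ⟨_, mem_inc_RR_self hRt⟩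
      omega
    · exact hnH (RR_edge_mem_H hRt h)

omit hH h7 in
lemma TX_card_rr_one {x : V} (h1 : rr G H x = 1) : (TX G H x).card ≤ 1 := by
  have h := TX_card_le (G := G) (H := H) (x := x) (F := inc (RR G H) x) ?_
  · rw [rr] at h1; omega
  · intro t ht
    rcases (mem_TX ht).2 with ⟨h5, -⟩ | ⟨hRt, -, -⟩
    · omega
    · exact mem_inc_RR_self hRt

lemma TX_card_mid {x : V} (h5 : 5 ≤ rr G H x) (h6 : rr G H x ≤ 6) :
    (TX G H x).card + rr G H x ≤ degE G H x := by
  have hsub : inc (RR G H) x ⊆ inc (Estar G H) x := inc_mono Finset.subset_union_left x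
  have h := TX_card_le (G := G) (H := H) (x := x) (F := inc (Estar G H) x \ inc (RR G H) x) ?_
  · rw [Finset.card_sdiff_of_subset hsub] at h
    have := rr_le_degE (G := G) (H := H) x
    rw [rr, degE] at *
    omega
  · intro t ht
    obtain ⟨hE, hcond⟩ := mem_TX ht
    rw [Finset.mem_sdiff]
    refine ⟨mem_inc.2 ⟨hE, Sym2.mem_mk_left _ _⟩, fun hmem => ?_⟩
    have hRt : s(x, t) ∈ RR G H := (mem_inc.1 hmem).1
    have hHt : s(x, t) ∈ H := RR_edge_mem_H hRt (by omega)
    have h9 := (rr_sum hH h7 hHt rfl).2 hRt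
    rcases hcond with ⟨-, hdr⟩ | ⟨-, hnH, -⟩
    · have hrt : rr G H t ≤ 2 := by
        rcases hdr with hd | hr
        · exact (defic_degG hH h7 hd).2
        · rw [relayer_rr hr]; omega
      omega
    · exact hnH hHt

omit hH h7 in
lemma TX_card_all (x : V) : (TX G H x).card ≤ degE G H x := by
  apply TX_card_le
  intro t ht
  exact mem_inc.2 ⟨(mem_TX ht).1, Sym2.mem_mk_left _ _⟩

/-- a payment to a deficient vertex along an `RR` edge -/
lemma pay_RR_to_defic {v x : V} (hR : s(v, x) ∈ RR G H) (hd : defic G H x) :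
    pay G H v x = 1 := by
  have hrx : rr G H x ≤ 2 := (defic_degG hH h7 hd).2
  rw [pay, if_pos]
  refine ⟨Finset.mem_union.2 (Or.inl hR), ?_⟩
  by_cases hHm : s(v, x) ∈ H
  · have h9 := (rr_sum hH h7 hHm rfl).2 hR
    exact Or.inl ⟨by omega, Or.inl hd⟩
  · exact Or.inr ⟨hR, hHm, hd⟩

lemma recv_defic {x : V} (hd : defic G H x) : 2 ≤ ∑ t, pay G H t x := by
  obtain ⟨hxA, hD2⟩ := hd
  have hdeg : degG G x = 2 := (defic_degG hH h7 ⟨hxA, hD2⟩).1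
  obtain ⟨e1, he1⟩ := Finset.card_pos.1 (mem_AA.1 hxA)
  rw [mem_inc] at he1
  have he1E : e1 ∈ inc G.edgeFinset x := mem_inc.2 ⟨RR_subset he1.1, he1.2⟩
  have hcard2 : (inc G.edgeFinset x).card = 2 := by rw [← degG_eq_card_inc]; exact hdeg
  obtain ⟨e2, he2, hne⟩ := Finset.exists_mem_ne (s := inc G.edgeFinset x) (by omega) e1
  rw [mem_inc] at he2
  obtain ⟨v, hvx, he1v⟩ := exists_other (RR_subset he1.1) he1.2
  obtain ⟨w, hwx, he2w⟩ := exists_other he2.1 he2.2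
  have hvw : v ≠ w := by
    intro h
    exact hne (by rw [he2w, ← h, ← he1v])
  have hpay1 : pay G H v x = 1 := by
    apply pay_RR_to_defic hH h7 _ ⟨hxA, hD2⟩
    rw [Sym2.eq_swap, ← he1v]
    exact he1.1
  have hpay2 : pay G H w x = 1 := by
    by_cases hRe2 : e2 ∈ RR G H
    · apply pay_RR_to_defic hH h7 _ ⟨hxA, hD2⟩
      rw [Sym2.eq_swap, ← he2w]
      exact hRe2
    · -- e2 ∈ H \ RR, so rr x = 1 and rr w ≥ 6
      have he2H : e2 ∈ H := DD_subset_H he1.1 (mem_DD.2 ⟨he2.1, hne, x, he2.2, he1.2⟩)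
      have hsum := (rr_sum hH h7 he2H he2w).1
      have hrx1 : rr G H x = 1 := by
        have hsub : inc (RR G H) x ⊆ {e1} := by
          intro e he
          rw [mem_inc] at he
          have heE : e ∈ inc G.edgeFinset x := mem_inc.2 ⟨RR_subset he.1, he.2⟩
          -- inc edgeFinset x = {e1, e2}
          have : inc G.edgeFinset x = {e1, e2} := by
            symm
            apply Finset.eq_of_subset_of_card_le
            · intro g hg
              rcases Finset.mem_insert.1 hg with h | h
              · exact h ▸ he1E
              · rw [Finset.mem_singleton] at h
                exact h ▸ (mem_inc.2 he2)
            · rw [hcard2, Finset.card_insert_of_notMem (by simpa using hne.symm)]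
              simp
          rw [this] at heE
          rcases Finset.mem_insert.1 heE with h | h
          · simp [h]
          · rw [Finset.mem_singleton] at h
            exact absurd (h ▸ he.1) hRe2
        have h1 : rr G H x ≤ 1 := by
          rw [rr]
          calc (inc (RR G H) x).card ≤ ({e1} : Finset _).card := Finset.card_le_card hsub
          _ = 1 := Finset.card_singleton _
        have h0 : 0 < rr G H x := mem_AA.1 hxA
        omega
      have hrw : 5 ≤ rr G H w := by omega
      rw [pay, if_pos]
      constructor
      · rw [Sym2.eq_swap, ← he2w]
        refine Finset.mem_union.2 (Or.inr (Finset.mem_filter.2 ⟨he2H, ?_⟩))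
        intro z hz
        rw [he2w] at hz
        rcases Sym2.mem_iff.1 hz with rfl | rfl
        · exact hxA
        · exact mem_AA.2 (by omega)
      · exact Or.inl ⟨hrw, Or.inl ⟨hxA, hD2⟩⟩
  calc (2 : ℤ) = ∑ t ∈ ({v, w} : Finset V), pay G H t x := by
        rw [Finset.sum_pair hvw, hpay1, hpay2]; norm_num
  _ ≤ ∑ t, pay G H t x := by
        apply Finset.sum_le_sum_of_subset_of_nonneg (Finset.subset_univ _)
        intro t _ _
        exact pay_nonneg t x

lemma recv_relayer {x : V} (hr : relayer G H x) : 1 ≤ ∑ t, pay G H t x := by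
  obtain ⟨hxA, hd3, hrr1, z, hz⟩ := hr
  have he0 : s(x, z) ∈ inc (RR G H) x := mem_inc_RR_self hz.1
  have hcard3 : (inc G.edgeFinset x).card = 3 := by rw [← degG_eq_card_inc]; exact hd3
  obtain ⟨g, hg, hgne⟩ := Finset.exists_mem_ne (s := inc G.edgeFinset x) (by omega) s(x, z)
  rw [mem_inc] at hg
  have hgR : g ∉ RR G H := by
    intro hgRR
    have : g ∈ inc (RR G H) x := mem_inc.2 ⟨hgRR, hg.2⟩
    have hs : inc (RR G H) x = {s(x, z)} := by
      symm
      apply Finset.eq_of_subset_of_card_le (Finset.singleton_subset_iff.2 he0)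
      rw [rr] at hrr1; rw [Finset.card_singleton, hrr1]
    rw [hs, Finset.mem_singleton] at this
    exact hgne this
  have hgH : g ∈ H := DD_subset_H hz.1 (mem_DD.2 ⟨hg.1, hgne, x, hg.2, Sym2.mem_mk_left _ _⟩)
  obtain ⟨y, hyx, hgy⟩ := exists_other hg.1 hg.2
  have hsum := (rr_sum hH h7 hgH hgy).1
  have hy5 : 5 ≤ rr G H y := by omega
  have hpay : pay G H y x = 1 := by
    rw [pay, if_pos]
    constructor
    · rw [Sym2.eq_swap, ← hgy]
      refine Finset.mem_union.2 (Or.inr (Finset.mem_filter.2 ⟨hgH, ?_⟩))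
      intro u hu
      rw [hgy] at hu
      rcases Sym2.mem_iff.1 hu with rfl | rfl
      · exact hxA
      · exact mem_AA.2 (by omega)
    · exact Or.inl ⟨hy5, Or.inr ⟨hxA, hd3, hrr1, z, hz⟩⟩
  calc (1 : ℤ) = pay G H y x := hpay.symm
  _ ≤ ∑ t, pay G H t x :=
      Finset.single_le_sum (fun t _ => pay_nonneg t x) (Finset.mem_univ y)

lemma TX_zero_defic {x : V} (hd : defic G H x) : TX G H x = ∅ := by
  rw [Finset.eq_empty_iff_forall_notMem]
  intro t ht
  obtain ⟨hdx, hrx⟩ := defic_degG hH h7 hd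
  rcases (mem_TX ht).2 with ⟨h5, -⟩ | ⟨hRt, -, hdt⟩
  · omega
  · have h3 := risky_other_deg3 (RR_risky hRt) hdx
    have := (defic_degG hH h7 hdt).1
    omega

lemma degE_ge_two {x : V} (hx : x ∈ AA G H) : 2 ≤ degE G H x := by
  rcases le_or_gt (rr G H x) 6 with h | h
  · rw [degE_eq_degG hH h7 hx h]
    obtain ⟨e, he⟩ := Finset.card_pos.1 (mem_AA.1 hx)
    rw [mem_inc] at he
    exact risky_deg2 (RR_risky he.1) he.2
  · have := rr_le_degE (G := G) (H := H) x
    have := TX_card_all (G := G) (H := H) x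
    omega

lemma pointwise {x : V} (hx : x ∈ AA G H) :
    (6 ≤ 2 * (degE G H x : ℤ) - ∑ t, pay G H x t + ∑ t, pay G H t x) ∧
      (4 ≤ rr G H x → 7 ≤ 2 * (degE G H x : ℤ) - ∑ t, pay G H x t + ∑ t, pay G H t x) := by
  have hq0 : 0 ≤ ∑ t, pay G H t x := Finset.sum_nonneg (fun t _ => pay_nonneg t x)
  have hp := sum_pay_eq_card (G := G) (H := H) x
  have hrd := rr_le_degE (G := G) (H := H) x
  have hD2 := degE_ge_two hH h7 hx
  have hr0 : 0 < rr G H x := mem_AA.1 hx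
  rw [hp]
  rcases Nat.lt_or_ge (rr G H x) 5 with h5 | h5
  · -- small r
    by_cases h1 : rr G H x = 1
    · have hple := TX_card_rr_one (G := G) (H := H) h1
      rcases Nat.lt_or_ge (degE G H x) 4 with hD | hD
      · -- degE = 2 or 3
        rcases Nat.lt_or_ge (degE G H x) 3 with hDD | hDD
        · -- deficient
          have hdef : defic G H x := ⟨hx, by omega⟩
          have hq2 := recv_defic hH h7 hdef
          have hp0 : (TX G H x).card = 0 := by rw [TX_zero_defic hH h7 hdef]; simp
          constructor
          · omega
          · intro h4; omega
        · -- degE = 3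
          have hD3 : degE G H x = 3 := by omega
          by_cases hTX : TX G H x = ∅
          · have hp0 : (TX G H x).card = 0 := by rw [hTX]; simp
            constructor
            · omega
            · intro h4; omega
          · obtain ⟨t, ht⟩ := Finset.nonempty_iff_ne_empty.2 hTX
            have hrel : relayer G H x := by
              rcases (mem_TX ht).2 with ⟨hge5, -⟩ | ⟨hRt, hnH, hdt⟩
              · omega
              · exact ⟨hx, by rw [← degE_eq_degG hH h7 hx (by omega)]; exact hD3, h1,
                  t, hRt, hnH, hdt⟩
            have hq1 := recv_relayer hH h7 hrel
            constructor
            · omega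
            · intro h4; omega
      · constructor
        · omega
        · intro h4; omega
    · have hTX := TX_zero_small (G := G) (H := H) (by omega) h1
      have hp0 : (TX G H x).card = 0 := by rw [hTX]; simp
      rcases Nat.lt_or_ge (degE G H x) 3 with hDD | hDD
      · have hdef : defic G H x := ⟨hx, by omega⟩
        have hq2 := recv_defic hH h7 hdef
        constructor
        · omega
        · intro h4; omega
      · constructor
        · omega
        · intro h4; omega
  · rcases Nat.lt_or_ge (rr G H x) 7 with h7' | h7'
    · have hmid := TX_card_mid hH h7 h5 (by omega)
      constructor
      · omega
      · intro h4; omega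
    · have hall := TX_card_all (G := G) (H := H) x
      constructor
      · omega
      · intro h4; omega

end WithHyp2

lemma keyLemma
    (hmad : ∀ K : G.Subgraph, K.verts.Nonempty → 2 * K.edgeSet.ncard ≤ 3 * K.verts.ncard)
    (hH : H ⊆ G.edgeFinset) (hne : H.Nonempty) : ∃ f ∈ H, gam G H f ≤ 6 := by
  by_contra hcon
  push_neg at hcon
  have h7 : ∀ f ∈ H, 7 ≤ gam G H f := fun f hf => hcon f hf
  -- RR is nonempty
  obtain ⟨f₀, hf₀⟩ := hne
  have hRne : (RR G H).Nonempty := by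
    have h70 := h7 f₀ hf₀
    rw [gam] at h70
    have hpos : 0 < ((Risky G).filter (fun e => DD G e ⊆ H ∧ f₀ ∈ DD G e)).card := by omega
    obtain ⟨e, he⟩ := Finset.card_pos.1 hpos
    rw [Finset.mem_filter] at he
    exact ⟨e, Finset.mem_filter.2 ⟨he.1, he.2.1⟩⟩
  -- a vertex with rr ≥ 4
  obtain ⟨estar, hestar⟩ := hRne
  obtain ⟨u, hu⟩ : ∃ u, u ∈ estar := ⟨estar.out.1, Sym2.out_fst_mem estar⟩
  have hdu : 2 ≤ degG G u := risky_deg2 (RR_risky hestar) hu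
  rw [degG_eq_card_inc] at hdu
  obtain ⟨g, hg, hgne⟩ := Finset.exists_mem_ne (s := inc G.edgeFinset u)
    (by omega) estar
  rw [mem_inc] at hg
  have hgH : g ∈ H :=
    DD_subset_H hestar (mem_DD.2 ⟨hg.1, hgne, u, hg.2, hu⟩)
  obtain ⟨b, hbu, hgb⟩ := exists_other hg.1 hg.2
  have hsum := (rr_sum hH h7 hgH hgb).1
  obtain ⟨x₀, hx₀⟩ : ∃ x₀, 4 ≤ rr G H x₀ := by
    rcases le_or_gt 4 (rr G H u) with h | h
    · exact ⟨u, h⟩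
    · exact ⟨b, by omega⟩
  have hx₀A : x₀ ∈ AA G H := mem_AA.2 (by omega)
  -- mad bound via the subgraph with vertex set AA and edges Estar
  have hmadE : 2 * (Estar G H).card ≤ 3 * (AA G H).card := by
    set K : G.Subgraph :=
      { verts := ↑(AA G H)
        Adj := fun a b => s(a, b) ∈ Estar G H
        adj_sub := fun hab => by
          have := Estar_subset hH h7 hab
          rw [SimpleGraph.mem_edgeFinset, SimpleGraph.mem_edgeSet] at this
          exact this
        edge_vert := fun hab => by
          exact Finset.mem_coe.2 (endpoint_mem_AA hH h7 hab (Sym2.mem_mk_left _ _))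
        symm := ⟨fun a b (hab : s(a, b) ∈ Estar G H) => show s(b, a) ∈ Estar G H by rwa [Sym2.eq_swap]⟩ } with hK
    have hedge : K.edgeSet = ↑(Estar G H) := by
      ext e
      induction e with
      | _ a b => exact Iff.rfl
    have h1 : K.edgeSet.ncard = (Estar G H).card := by
      rw [hedge, Set.ncard_coe_finset]
    have h2 : K.verts.ncard = (AA G H).card := by
      rw [hK]
      exact Set.ncard_coe_finset _
    have h3 := hmad K ⟨x₀, Finset.mem_coe.2 hx₀A⟩
    rw [h1, h2] at h3
    exact h3
  -- total charge
  have hcancel : ∑ x ∈ AA G H, (∑ t, pay G H x t) = ∑ x ∈ AA G H, (∑ t, pay G H t x) := by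
    have hz1 : ∀ x, x ∉ AA G H → ∑ t, pay G H x t = 0 := by
      intro x hxA
      apply Finset.sum_eq_zero
      intro t _
      rw [pay, if_neg]
      rintro ⟨hE, -⟩
      exact hxA (endpoint_mem_AA hH h7 hE (Sym2.mem_mk_left _ _))
    have hz2 : ∀ x, x ∉ AA G H → ∑ t, pay G H t x = 0 := by
      intro x hxA
      apply Finset.sum_eq_zero
      intro t _
      rw [pay, if_neg]
      rintro ⟨hE, -⟩
      exact hxA (endpoint_mem_AA hH h7 hE (Sym2.mem_mk_right _ _))
    rw [Finset.sum_subset (Finset.subset_univ (AA G H)) (fun x _ h => hz1 x h),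
        Finset.sum_subset (Finset.subset_univ (AA G H)) (fun x _ h => hz2 x h)]
    exact Finset.sum_comm
  have hlower : 6 * ((AA G H).card : ℤ) + 1 ≤ ∑ x ∈ AA G H, 2 * (degE G H x : ℤ) := by
    have hstep : ∀ x ∈ AA G H,
        (6 : ℤ) ≤ 2 * (degE G H x : ℤ) - ∑ t, pay G H x t + ∑ t, pay G H t x :=
      fun x hxA => (pointwise hH h7 hxA).1
    have hlt : ∑ x ∈ AA G H, (6 : ℤ) <
        ∑ x ∈ AA G H, (2 * (degE G H x : ℤ) - ∑ t, pay G H x t + ∑ t, pay G H t x) := by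
      apply Finset.sum_lt_sum hstep
      exact ⟨x₀, hx₀A, by
        have := (pointwise hH h7 hx₀A).2 hx₀
        omega⟩
    rw [Finset.sum_const, Finset.sum_add_distrib, Finset.sum_sub_distrib] at hlt
    rw [hcancel] at hlt
    simp only [nsmul_eq_mul] at hlt
    have : ∑ x ∈ AA G H, 2 * (degE G H x : ℤ) - ∑ x ∈ AA G H, (∑ t, pay G H t x)
        + ∑ x ∈ AA G H, (∑ t, pay G H t x) = ∑ x ∈ AA G H, 2 * (degE G H x : ℤ) := by ring
    omega
  have hupper : ∑ x ∈ AA G H, 2 * (degE G H x : ℤ) = 4 * ((Estar G H).card : ℤ) := by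
    rw [← Finset.mul_sum, handshakeE hH h7]
    ring
  rw [hupper] at hlower
  have : (2 * (Estar G H).card : ℤ) ≤ (3 * (AA G H).card : ℤ) := by exact_mod_cast hmadE
  omega

end Key

/-! ### Stage C : a good peeling order -/

lemma order_exists
    (hmad : ∀ K : G.Subgraph, K.verts.Nonempty → 2 * K.edgeSet.ncard ≤ 3 * K.verts.ncard)
    (H : Finset (Sym2 V)) (hH : H ⊆ G.edgeFinset) :
    ∃ L : List (Sym2 V), L.Nodup ∧ L.toFinset = H ∧
      ∀ (L₁ : List (Sym2 V)) (f : Sym2 V) (L₂ : List (Sym2 V)), L = L₁ ++ f :: L₂ →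
        gam G (f :: L₂).toFinset f ≤ 6 := by
  induction H using Finset.strongInduction with
  | _ H ih =>
    rcases H.eq_empty_or_nonempty with rfl | hne
    · refine ⟨[], List.nodup_nil, by simp, ?_⟩
      intro L₁ f L₂ h
      exact absurd h.symm (by simp)
    · obtain ⟨f, hfH, hgam⟩ := keyLemma hmad hH hne
      obtain ⟨L', hnd', htf', hgood'⟩ :=
        ih (H.erase f) (Finset.erase_ssubset hfH) ((Finset.erase_subset _ _).trans hH)
      have hfL' : f ∉ L' := by
        intro h
        have : f ∈ H.erase f := htf' ▸ List.mem_toFinset.2 h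
        simp at this
      have htf : (f :: L').toFinset = H := by
        rw [List.toFinset_cons, htf', Finset.insert_erase hfH]
      refine ⟨f :: L', List.nodup_cons.2 ⟨hfL', hnd'⟩, htf, ?_⟩
      intro L₁ g L₂ heq
      cases L₁ with
      | nil =>
        simp only [List.nil_append] at heq
        obtain ⟨rfl, rfl⟩ : g = f ∧ L₂ = L' := by
          injection heq with h1 h2
          exact ⟨h1.symm, h2.symm⟩
        rw [htf]
        exact hgam
      | cons a L₁' =>
        simp only [List.cons_append] at heq
        injection heq with h1 h2
        exact hgood' L₁' g L₂ h2

/-! ### Stage D : assigning the weights -/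

lemma assign_aux (W : Finset ℕ) (hpos : ∀ n ∈ W, 0 < n)
    (hcard : W.card = G.edgeFinset.card + 6) :
    ∀ (M2 M1 : List (Sym2 V)) (w₀ : Sym2 V → ℕ),
      (M1 ++ M2).Nodup → (M1 ++ M2).toFinset = G.edgeFinset →
      (∀ (L₁ : List (Sym2 V)) (f : Sym2 V) (L₂ : List (Sym2 V)),
        (M1 ++ M2).reverse = L₁ ++ f :: L₂ → gam G (f :: L₂).toFinset f ≤ 6) →
      (∀ e ∈ M1.toFinset, w₀ e ∈ W) →
      Set.InjOn w₀ ↑M1.toFinset →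
      (∀ e ∈ Risky G, ∀ u v : V, e = s(u, v) → DD G e ⊆ M1.toFinset →
        ∑ g ∈ (inc G.edgeFinset u).erase e, w₀ g ≠
          ∑ g ∈ (inc G.edgeFinset v).erase e, w₀ g) →
      ∃ w : Sym2 V → ℕ,
        (∀ e ∈ G.edgeFinset, w e ∈ W) ∧ Set.InjOn w ↑G.edgeFinset ∧
        (∀ e ∈ Risky G, ∀ u v : V, e = s(u, v) →
          ∑ g ∈ (inc G.edgeFinset u).erase e, w g ≠
            ∑ g ∈ (inc G.edgeFinset v).erase e, w g) := by
  intro M2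
  induction M2 with
  | nil =>
    intro M1 w₀ hnd htf hgood hmap hinj hinv
    rw [List.append_nil] at htf
    refine ⟨w₀, ?_, ?_, ?_⟩
    · intro e he; exact hmap e (htf ▸ he)
    · rw [← htf]; exact hinj
    · intro e he u v huv
      exact hinv e he u v huv (htf ▸ DD_subset_edgeFinset e)
  | cons f M2' IH =>
    intro M1 w₀ hnd htf hgood hmap hinj hinv
    have hfE : f ∈ G.edgeFinset := by
      rw [← htf]; exact List.mem_toFinset.2 (by simp)
    have hfM1 : f ∉ M1 := by
      intro h
      exact (List.disjoint_of_nodup_append hnd) h (by simp)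
    have hfM1' : f ∉ M1.toFinset := fun h => hfM1 (List.mem_toFinset.1 h)
    have hsplit : (M1 ++ f :: M2').reverse = M2'.reverse ++ f :: M1.reverse := by
      simp
    have hgam : gam G (f :: M1.reverse).toFinset f ≤ 6 := hgood _ f _ hsplit
    have hins : (f :: M1.reverse).toFinset = insert f M1.toFinset := by simp
    rw [hins] at hgam
    set C : Finset (Sym2 V) :=
      (Risky G).filter (fun e => DD G e ⊆ insert f M1.toFinset ∧ f ∈ DD G e) with hC
    have hCcard : C.card ≤ 6 := hgam
    set forb : Sym2 V → Finset ℕ := fun e =>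
      ((Finset.univ ×ˢ Finset.univ).filter
        (fun p : V × V => e = s(p.1, p.2) ∧ f ∈ inc G.edgeFinset p.1)).image
        (fun p => (∑ g ∈ (inc G.edgeFinset p.2).erase e, w₀ g) -
          (∑ g ∈ ((inc G.edgeFinset p.1).erase e).erase f, w₀ g)) with hforb
    set T := C.biUnion forb with hT
    have hTcard : T.card ≤ 6 := by
      refine le_trans (Finset.card_biUnion_le) ?_
      have hone : ∀ e ∈ C, (forb e).card ≤ 1 := by
        intro e he
        rw [hforb]
        refine le_trans (Finset.card_image_le) ?_
        rw [Finset.card_le_one]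
        intro p hp q hq
        rw [Finset.mem_filter] at hp hq
        obtain ⟨-, hpe, hpf⟩ := hp
        obtain ⟨-, hqe, hqf⟩ := hq
        rw [hC, Finset.mem_filter] at he
        have heE : e ∈ G.edgeFinset := risky_mem_edgeFinset he.1
        have hfne : f ≠ e := (mem_DD.1 he.2.2).2.1
        have hpq := hpe.symm.trans hqe
        rw [Sym2.eq_iff] at hpq
        rcases hpq with ⟨h1, h2⟩ | ⟨h1, h2⟩
        · exact Prod.ext h1 h2
        · exfalso
          have hf1 : p.1 ∈ f := (mem_inc.1 hpf).2
          have hf2 : q.1 ∈ f := (mem_inc.1 hqf).2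
          have hne12 : p.1 ≠ q.1 := by
            intro hh
            apply nondiag_of_mem_edgeFinset heE
            rw [hpe, hh, ← h2]
            simp
          apply hfne
          rw [eq_of_two_mem hne12 hf1 hf2, hpe, ← h2]
      calc ∑ e ∈ C, (forb e).card ≤ ∑ _e ∈ C, 1 := Finset.sum_le_sum hone
      _ = C.card := by simp
      _ ≤ 6 := hCcard
    have hM1nd : M1.Nodup := hnd.of_append_left
    have hM1len : M1.toFinset.card = M1.length := List.toFinset_card_of_nodup hM1nd
    have hlen : M1.length + (M2'.length + 1) = G.edgeFinset.card := by
      have h1 : (M1 ++ f :: M2').toFinset.card = (M1 ++ f :: M2').length :=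
        List.toFinset_card_of_nodup hnd
      rw [htf] at h1
      rw [h1]
      simp
    have husedcard : (M1.toFinset.image w₀).card ≤ M1.length :=
      le_trans Finset.card_image_le (le_of_eq hM1len)
    have hAvail : ((W \ M1.toFinset.image w₀) \ T).Nonempty := by
      rw [← Finset.card_pos]
      have h1 := Finset.le_card_sdiff (M1.toFinset.image w₀) W
      have h2 := Finset.le_card_sdiff T (W \ M1.toFinset.image w₀)
      omega
    obtain ⟨t, ht⟩ := hAvail
    rw [Finset.mem_sdiff, Finset.mem_sdiff] at ht
    obtain ⟨⟨htW, htused⟩, htT⟩ := ht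
    have htpos : 0 < t := hpos t htW
    set w₁ := Function.update w₀ f t with hw₁
    have hw₁f : w₁ f = t := Function.update_self f t w₀
    have hw₁g : ∀ g, g ≠ f → w₁ g = w₀ g := fun g hg => Function.update_of_ne hg t w₀
    have happ : (M1 ++ [f]) ++ M2' = M1 ++ f :: M2' := by simp
    have htfI : ((M1 ++ [f]).toFinset) = insert f M1.toFinset := by
      ext g
      simp [or_comm]
    have hmapsI : ∀ e ∈ (M1 ++ [f]).toFinset, w₁ e ∈ W := by
      intro e he
      rw [htfI, Finset.mem_insert] at he
      rcases he with rfl | he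
      · rw [hw₁f]; exact htW
      · rw [hw₁g e (fun h => hfM1' (h ▸ he))]; exact hmap e he
    have hinjI : Set.InjOn w₁ ↑(M1 ++ [f]).toFinset := by
      intro a ha b hb hab
      rw [Finset.mem_coe, htfI, Finset.mem_insert] at ha hb
      rcases ha with rfl | ha
      · rcases hb with rfl | hb
        · rfl
        · exfalso
          rw [hw₁f, hw₁g b (fun h => hfM1' (h ▸ hb))] at hab
          exact htused (Finset.mem_image.2 ⟨b, hb, hab.symm⟩)
      · rcases hb with rfl | hb
        · exfalso
          rw [hw₁f, hw₁g a (fun h => hfM1' (h ▸ ha))] at hab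
          exact htused (Finset.mem_image.2 ⟨a, ha, hab⟩)
        · rw [hw₁g a (fun h => hfM1' (h ▸ ha)), hw₁g b (fun h => hfM1' (h ▸ hb))] at hab
          exact hinj (Finset.mem_coe.2 ha) (Finset.mem_coe.2 hb) hab
    have hinvI : ∀ e ∈ Risky G, ∀ u v : V, e = s(u, v) → DD G e ⊆ (M1 ++ [f]).toFinset →
        ∑ g ∈ (inc G.edgeFinset u).erase e, w₁ g ≠
          ∑ g ∈ (inc G.edgeFinset v).erase e, w₁ g := by
      intro e he u v huv hDD
      rw [htfI] at hDD
      by_cases hfD : f ∈ DD G e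
      · have heC : e ∈ C := by rw [hC, Finset.mem_filter]; exact ⟨he, hDD, hfD⟩
        have heE := risky_mem_edgeFinset he
        have hfne : f ≠ e := (mem_DD.1 hfD).2.1
        have huv_ne : u ≠ v := by
          intro hh
          exact nondiag_of_mem_edgeFinset heE (by rw [huv, hh]; simp)
        have hside : (f ∈ inc G.edgeFinset u ∧ f ∉ inc G.edgeFinset v) ∨
            (f ∈ inc G.edgeFinset v ∧ f ∉ inc G.edgeFinset u) := by
          obtain ⟨hfEe, -, x, hxf, hxe⟩ := mem_DD.1 hfD
          have hnotboth : ¬ (u ∈ f ∧ v ∈ f) := by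
            rintro ⟨h1, h2⟩
            exact hfne (by rw [eq_of_two_mem huv_ne h1 h2, ← huv])
          rw [huv, Sym2.mem_iff] at hxe
          rcases hxe with rfl | rfl
          · exact Or.inl ⟨mem_inc.2 ⟨hfEe, hxf⟩,
              fun hc => hnotboth ⟨hxf, (mem_inc.1 hc).2⟩⟩
          · exact Or.inr ⟨mem_inc.2 ⟨hfEe, hxf⟩,
              fun hc => hnotboth ⟨(mem_inc.1 hc).2, hxf⟩⟩
        have key : ∀ a b : V, e = s(a, b) → f ∈ inc G.edgeFinset a →
            f ∉ inc G.edgeFinset b →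
            ∑ g ∈ (inc G.edgeFinset a).erase e, w₁ g ≠
              ∑ g ∈ (inc G.edgeFinset b).erase e, w₁ g := by
          intro a b hab hfa hfb
          have hval : (∑ g ∈ (inc G.edgeFinset b).erase e, w₀ g) -
              (∑ g ∈ ((inc G.edgeFinset a).erase e).erase f, w₀ g) ∈ T := by
            rw [hT]
            refine Finset.mem_biUnion.2 ⟨e, heC, ?_⟩
            rw [hforb]
            refine Finset.mem_image.2 ⟨(a, b), ?_, rfl⟩
            rw [Finset.mem_filter]
            exact ⟨by simp, hab, hfa⟩
          have hfae : f ∈ (inc G.edgeFinset a).erase e := Finset.mem_erase.2 ⟨hfne, hfa⟩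
          have hLHS : ∑ g ∈ (inc G.edgeFinset a).erase e, w₁ g =
              t + ∑ g ∈ ((inc G.edgeFinset a).erase e).erase f, w₀ g := by
            rw [← Finset.add_sum_erase _ w₁ hfae, hw₁f]
            congr 1
            apply Finset.sum_congr rfl
            intro g hg
            exact hw₁g g (Finset.ne_of_mem_erase hg)
          have hRHS : ∑ g ∈ (inc G.edgeFinset b).erase e, w₁ g =
              ∑ g ∈ (inc G.edgeFinset b).erase e, w₀ g := by
            apply Finset.sum_congr rfl
            intro g hg
            exact hw₁g g (fun h => hfb (h ▸ (Finset.mem_of_mem_erase hg)))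
          rw [hLHS, hRHS]
          intro hcontra
          apply htT
          have hXY : (∑ g ∈ (inc G.edgeFinset b).erase e, w₀ g) -
              (∑ g ∈ ((inc G.edgeFinset a).erase e).erase f, w₀ g) = t := by omega
          rwa [hXY] at hval
        rcases hside with ⟨h1, h2⟩ | ⟨h1, h2⟩
        · exact key u v huv h1 h2
        · exact (key v u (by rw [huv]; exact Sym2.eq_swap) h1 h2).symm
      · have hDD' : DD G e ⊆ M1.toFinset := by
          intro g hg
          rcases Finset.mem_insert.1 (hDD hg) with rfl | h
          · exact absurd hg hfD
          · exact h
        have hold := hinv e he u v huv hDD'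
        have hueq : ∀ g ∈ (inc G.edgeFinset u).erase e, w₁ g = w₀ g := by
          intro g hg
          refine hw₁g g (fun h => hfD ?_)
          rw [← h]
          exact inc_erase_subset_DD (huv ▸ Sym2.mem_mk_left u v) hg
        have hveq : ∀ g ∈ (inc G.edgeFinset v).erase e, w₁ g = w₀ g := by
          intro g hg
          refine hw₁g g (fun h => hfD ?_)
          rw [← h]
          exact inc_erase_subset_DD (huv ▸ Sym2.mem_mk_right u v) hg
        rw [Finset.sum_congr rfl hueq, Finset.sum_congr rfl hveq]
        exact hold
    exact IH (M1 ++ [f]) w₁ (by rw [happ]; exact hnd) (by rw [happ]; exact htf)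
      (by rw [happ]; exact hgood) hmapsI hinjI hinvI

/-! ### Putting everything together -/

lemma main_exists (hnice : Nice G)
    (hmad : ∀ K : G.Subgraph, K.verts.Nonempty → 2 * K.edgeSet.ncard ≤ 3 * K.verts.ncard)
    (W : Finset ℕ) (hpos : ∀ n ∈ W, 0 < n) (hcard : W.card = G.edgeFinset.card + 6) :
    ∃ w : Sym2 V → ℕ, Set.InjOn w ↑G.edgeFinset ∧ (∀ e ∈ G.edgeFinset, w e ∈ W) ∧ NSD G w := by
  obtain ⟨L, hnd, htf, hgood⟩ := order_exists hmad G.edgeFinset (subset_refl _)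
  obtain ⟨w, hmap, hinj, hinv⟩ := assign_aux W hpos hcard L.reverse [] (fun _ => 0)
    (by simpa using hnd)
    (by simpa using htf)
    (by
      intro L₁ g L₂ h
      apply hgood L₁ g L₂
      rw [← h]
      simp)
    (by intro e he; simp at he)
    (by intro a ha _ _ _; simp at ha)
    (by
      intro e he u v huv hDD
      exfalso
      have heE : e ∈ G.edgeFinset := risky_mem_edgeFinset he
      have hue : u ∈ e := by rw [huv]; exact Sym2.mem_mk_left u v
      have hdu : 2 ≤ degG G u := risky_deg2 he hue
      rw [degG_eq_card_inc] at hdu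
      have hmem : e ∈ inc G.edgeFinset u := mem_inc.2 ⟨heE, hue⟩
      have hcard1 : 1 ≤ ((inc G.edgeFinset u).erase e).card := by
        rw [Finset.card_erase_of_mem hmem]; omega
      obtain ⟨g, hg⟩ := Finset.card_pos.1 hcard1
      have := hDD (inc_erase_subset_DD hue hg)
      simp at this)
  refine ⟨w, hinj, hmap, ?_⟩
  intro u v hadj
  have he : s(u, v) ∈ G.edgeFinset := SimpleGraph.mem_edgeFinset.2 hadj
  have hu_mem : s(u, v) ∈ inc G.edgeFinset u := mem_inc.2 ⟨he, Sym2.mem_mk_left u v⟩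
  have hv_mem : s(u, v) ∈ inc G.edgeFinset v := mem_inc.2 ⟨he, Sym2.mem_mk_right u v⟩
  have hvu : s(v, u) = s(u, v) := Sym2.eq_swap
  have hσu : vSum G w u = w s(u, v) + ∑ g ∈ (inc G.edgeFinset u).erase s(u, v), w g := by
    rw [sum_inc, ← Finset.add_sum_erase _ w hu_mem]
  have hσv : vSum G w v = w s(u, v) + ∑ g ∈ (inc G.edgeFinset v).erase s(u, v), w g := by
    rw [sum_inc, ← Finset.add_sum_erase _ w hv_mem]
  have hne : ∑ g ∈ (inc G.edgeFinset u).erase s(u, v), w g ≠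
      ∑ g ∈ (inc G.edgeFinset v).erase s(u, v), w g := by
    have hdu1 : 1 ≤ degG G u := by
      rw [degG_eq_card_inc]; exact Finset.card_pos.2 ⟨s(u, v), hu_mem⟩
    have hdv1 : 1 ≤ degG G v := by
      rw [degG_eq_card_inc]; exact Finset.card_pos.2 ⟨s(u, v), hv_mem⟩
    have hwpos : ∀ g ∈ G.edgeFinset, 1 ≤ w g := fun g hg => hpos _ (hmap g hg)
    -- helper for the pendant case
    have pend : ∀ a b : V, s(a, b) ∈ G.edgeFinset → degG G a = 1 → 2 ≤ degG G b →
        ∑ g ∈ (inc G.edgeFinset a).erase s(a, b), w g ≠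
          ∑ g ∈ (inc G.edgeFinset b).erase s(a, b), w g := by
      intro a b hab hda hdb
      have hma : s(a, b) ∈ inc G.edgeFinset a := mem_inc.2 ⟨hab, Sym2.mem_mk_left a b⟩
      have hmb : s(a, b) ∈ inc G.edgeFinset b := mem_inc.2 ⟨hab, Sym2.mem_mk_right a b⟩
      have h0 : ((inc G.edgeFinset a).erase s(a, b)).card = 0 := by
        rw [Finset.card_erase_of_mem hma, ← degG_eq_card_inc, hda]
      have hempty : (inc G.edgeFinset a).erase s(a, b) = ∅ := Finset.card_eq_zero.1 h0
      have h1 : 1 ≤ ((inc G.edgeFinset b).erase s(a, b)).card := by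
        rw [Finset.card_erase_of_mem hmb, ← degG_eq_card_inc]; omega
      obtain ⟨g, hg⟩ := Finset.card_pos.1 h1
      have hgE : g ∈ G.edgeFinset := (mem_inc.1 (Finset.mem_of_mem_erase hg)).1
      have : 1 ≤ ∑ g ∈ (inc G.edgeFinset b).erase s(a, b), w g :=
        le_trans (hwpos g hgE) (Finset.single_le_sum (fun i _ => Nat.zero_le (w i)) hg)
      rw [hempty]
      simp only [Finset.sum_empty]
      omega
    rcases Nat.lt_or_ge (degG G u) 2 with hdu | hdu
    · -- degG u = 1
      have hdu1' : degG G u = 1 := by omega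
      have hdv2 : 2 ≤ degG G v := by
        have := hnice u v hadj
        rcases Nat.lt_or_ge (degG G v) 2 with h | h
        · exfalso; exact this ⟨hdu1', by omega⟩
        · exact h
      exact pend u v he hdu1' hdv2
    · rcases Nat.lt_or_ge (degG G v) 2 with hdv | hdv
      · have hdv1' : degG G v = 1 := by omega
        have h := pend v u (hvu ▸ he) hdv1' hdu
        rw [hvu] at h
        exact h.symm
      · -- both endpoints have degree ≥ 2
        by_cases h3 : 3 ≤ degG G u ∨ 3 ≤ degG G v
        · have hrisky : s(u, v) ∈ Risky G := by
            rw [Risky, Finset.mem_filter]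
            refine ⟨he, fun x hx => ?_, ?_⟩
            · rcases Sym2.mem_iff.1 hx with rfl | rfl
              · exact hdu
              · exact hdv
            · rcases h3 with h | h
              · exact ⟨u, Sym2.mem_mk_left u v, h⟩
              · exact ⟨v, Sym2.mem_mk_right u v, h⟩
          exact hinv s(u, v) hrisky u v rfl
        · push_neg at h3
          have hdu2 : degG G u = 2 := by omega
          have hdv2 : degG G v = 2 := by omega
          have hcu : ((inc G.edgeFinset u).erase s(u, v)).card = 1 := by
            rw [Finset.card_erase_of_mem hu_mem, ← degG_eq_card_inc, hdu2]
          have hcv : ((inc G.edgeFinset v).erase s(u, v)).card = 1 := by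
            rw [Finset.card_erase_of_mem hv_mem, ← degG_eq_card_inc, hdv2]
          obtain ⟨g, hgeq⟩ := Finset.card_eq_one.1 hcu
          obtain ⟨g', hgeq'⟩ := Finset.card_eq_one.1 hcv
          have hgmem : g ∈ (inc G.edgeFinset u).erase s(u, v) := by
            rw [hgeq]; exact Finset.mem_singleton_self g
          have hgmem' : g' ∈ (inc G.edgeFinset v).erase s(u, v) := by
            rw [hgeq']; exact Finset.mem_singleton_self g'
          have hgE : g ∈ G.edgeFinset := (mem_inc.1 (Finset.mem_of_mem_erase hgmem)).1
          have hgE' : g' ∈ G.edgeFinset := (mem_inc.1 (Finset.mem_of_mem_erase hgmem')).1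
          have hgg' : g ≠ g' := by
            intro hcontra
            have hug : u ∈ g := (mem_inc.1 (Finset.mem_of_mem_erase hgmem)).2
            have hvg : v ∈ g := by
              rw [hcontra]
              exact (mem_inc.1 (Finset.mem_of_mem_erase hgmem')).2
            have huvne : u ≠ v := G.ne_of_adj hadj
            exact (Finset.mem_erase.1 hgmem).1 (eq_of_two_mem huvne hug hvg)
          rw [hgeq, hgeq', Finset.sum_singleton, Finset.sum_singleton]
          intro hww
          exact hgg' (hinj (Finset.mem_coe.2 hgE) (Finset.mem_coe.2 hgE') hww)
  rw [hσu, hσv]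
  omega

end NSDWork


theorem stmt_14 {V : Type*} [Fintype V] (G : SimpleGraph V) (hnice : Nice G)
    (hmad : ∀ H : G.Subgraph, H.verts.Nonempty → 2 * H.edgeSet.ncard ≤ 3 * H.verts.ncard) :
    (∀ W : Finset ℕ, (∀ x ∈ W, 0 < x) → W.card = G.edgeSet.ncard + 6 →
        ∃ w : Sym2 V → ℕ, Set.InjOn w G.edgeSet ∧ Set.MapsTo w G.edgeSet ↑W ∧ NSD G w)
      ∧ chiE1 G ≤ G.edgeSet.ncard + 6 := by
  have hm : G.edgeSet.ncard = G.edgeFinset.card := Set.ncard_eq_toFinset_card' _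
  have part1 : ∀ W : Finset ℕ, (∀ x ∈ W, 0 < x) → W.card = G.edgeSet.ncard + 6 →
      ∃ w : Sym2 V → ℕ, Set.InjOn w G.edgeSet ∧ Set.MapsTo w G.edgeSet ↑W ∧ NSD G w := by
    intro W hpos hcard
    obtain ⟨w, hinj, hmap, hnsd⟩ := NSDWork.main_exists hnice hmad W hpos (by omega)
    refine ⟨w, ?_, ?_, hnsd⟩
    · rwa [← SimpleGraph.coe_edgeFinset]
    · intro e he
      exact Finset.mem_coe.2 (hmap e (SimpleGraph.mem_edgeFinset.2 he))
  refine ⟨part1, ?_⟩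
  obtain ⟨w, hinj, hmap, hnsd⟩ := part1 (Finset.Icc 1 (G.edgeSet.ncard + 6))
    (fun x hx => (Finset.mem_Icc.1 hx).1) (by rw [Nat.card_Icc]; omega)
  apply Nat.sInf_le
  refine ⟨w, ?_, ?_, hnsd⟩
  · intro e he
    exact hmap he
  · intro e he f hf hw
    exact hinj he hf hw
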